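/- Let X be a real normed space, F : X → ℝ Gâteaux differentiable with Λ-firmly Lipschitz derivative DF, where Λ : X → X* is bounded linear, self-adjoint and positive semi-definite. Let x̄ ∈ X, let Ω ∋ x̄, let Γ : X → X* be bounded linear self-adjoint with ⟨DF(z) − DF(x̄), z − x̄⟩ ≥ q_Γ(z − x̄) for all z ∈ Ω, fix ζ > 0, and suppose Γ̃ defined by q_{Γ̃}(x) := q_Γ(x) − (ζ/2)‖x‖_Λ² (i.e. Γ̃ = Γ − (ζ/2)Λ) is Young with witness |Γ̃|. Then for every β > 0, every z ∈ Ω and every x ∈ X: ⟨DF(z) − DF(x̄), x − x̄⟩ ≥ ( q_{Γ̃}(x − x̄) − β ‖x − x̄‖_{|Γ̃|}² ) − ( (1/(2ζ)) ‖x − z‖_Λ² + β^{−1} ‖x − z‖_{|Γ̃|}² − q_{Γ̃}(x − z) ). -/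

import Mathlib

private lemma amgm_aux (ζ A B : ℝ) (hζ : 0 < ζ) (hA : 0 ≤ A) (hB : 0 ≤ B) :
    Real.sqrt A * Real.sqrt B ≤ ζ / 2 * A + 1 / (2 * ζ) * B := by
  have h1 : Real.sqrt A ^ 2 = A := Real.sq_sqrt hA
  have h2 : Real.sqrt B ^ 2 = B := Real.sq_sqrt hB
  have h3 := sq_nonneg (ζ * Real.sqrt A - Real.sqrt B)
  have hkey : 2 * ζ * (Real.sqrt A * Real.sqrt B) ≤ ζ ^ 2 * A + B := by nlinarith
  rw [← sub_nonneg]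
  have heq : ζ / 2 * A + 1 / (2 * ζ) * B - Real.sqrt A * Real.sqrt B
      = (ζ ^ 2 * A + B - 2 * ζ * (Real.sqrt A * Real.sqrt B)) / (2 * ζ) := by
    field_simp
  rw [heq]
  exact div_nonneg (by linarith) (by linarith)

set_option maxHeartbeats 1000000 in
theorem stmt7 {X : Type*} [NormedAddCommGroup X] [NormedSpace ℝ X]
    (Λ : X →L[ℝ] StrongDual ℝ X)
    (hΛsa : ∀ x z : X, Λ x z = Λ z x)
    (hΛpsd : ∀ x : X, 0 ≤ Λ x x)
    (F : X → ℝ) (DF : X → StrongDual ℝ X)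
    (hGateaux : ∀ x h : X, HasDerivAt (fun t : ℝ => F (x + t • h)) (DF x h) 0)
    (hfirm : ∀ x z h : X,
      (DF z - DF x) h ≤ Real.sqrt (Λ (x - z) (x - z)) * Real.sqrt (Λ h h))
    (xb : X) (Ω : Set X) (hxbΩ : xb ∈ Ω)
    (Γ : X →L[ℝ] StrongDual ℝ X)
    (hΓsa : ∀ x z : X, Γ x z = Γ z x)
    (hmono : ∀ z ∈ Ω, Γ (z - xb) (z - xb) ≤ (DF z - DF xb) (z - xb))
    (ζ : ℝ) (hζ : 0 < ζ)
    (Γt : X →L[ℝ] StrongDual ℝ X)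
    (hΓt : Γt = Γ - (ζ / 2) • Λ)
    (absΓt : X →L[ℝ] StrongDual ℝ X)
    (habsΓtsa : ∀ x z : X, absΓt x z = absΓt z x)
    (habsΓtpsd : ∀ x : X, 0 ≤ absΓt x x)
    (hYoung : ∀ x z : X, 2 * Γt x z ≤ absΓt x x + absΓt z z) :
    ∀ β : ℝ, 0 < β → ∀ z ∈ Ω, ∀ x : X,
      (DF z - DF xb) (x - xb) ≥
        (Γt (x - xb) (x - xb) - β * absΓt (x - xb) (x - xb))
          - ((1 / (2 * ζ)) * Λ (x - z) (x - z) + β⁻¹ * absΓt (x - z) (x - z)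
              - Γt (x - z) (x - z)) := by
  intro β hβ z hz x
  set u := x - xb with hu
  set v := x - z with hv
  set w := z - xb with hw
  have huwv : u = w + v := by rw [hu, hv, hw]; abel
  -- Γt values and self-adjointness
  have hΓtval : ∀ a b : X, Γt a b = Γ a b - ζ / 2 * Λ a b := by
    intro a b
    simp [hΓt, ContinuousLinearMap.sub_apply, ContinuousLinearMap.smul_apply]
  have hΓtsa : ∀ a b : X, Γt a b = Γt b a := by
    intro a b
    rw [hΓtval, hΓtval, hΓsa a b, hΛsa a b]
  -- monotonicity piece
  have hA : Γt w w + ζ / 2 * Λ w w ≤ (DF z - DF xb) w := by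
    have h := hmono z hz
    rw [← hw] at h
    rw [hΓtval]
    linarith
  -- firm Lipschitz piece
  have hB : -(Real.sqrt (Λ w w) * Real.sqrt (Λ v v)) ≤ (DF z - DF xb) v := by
    have h := hfirm z xb v
    rw [← hw] at h
    have h2 : (DF xb - DF z) v = -((DF z - DF xb) v) := by
      simp [ContinuousLinearMap.sub_apply]
    rw [h2] at h
    linarith
  -- AM-GM
  have hAM : Real.sqrt (Λ w w) * Real.sqrt (Λ v v)
      ≤ ζ / 2 * Λ w w + 1 / (2 * ζ) * Λ v v :=
    amgm_aux ζ _ _ hζ (hΛpsd w) (hΛpsd v)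
  -- scaled Young inequality
  have hYoung' : 2 * Γt u v ≤ β * absΓt u u + β⁻¹ * absΓt v v := by
    have hs : (0:ℝ) < Real.sqrt β := Real.sqrt_pos.2 hβ
    have hs2 : Real.sqrt β * Real.sqrt β = β := Real.mul_self_sqrt hβ.le
    have h := hYoung (Real.sqrt β • u) ((Real.sqrt β)⁻¹ • v)
    simp only [map_smul, ContinuousLinearMap.smul_apply, smul_eq_mul] at h
    have e1 : (Real.sqrt β)⁻¹ * (Real.sqrt β * Γt u v) = Γt u v := by
      rw [← mul_assoc, inv_mul_cancel₀ hs.ne', one_mul]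
    have e2 : Real.sqrt β * (Real.sqrt β * absΓt u u) = β * absΓt u u := by
      rw [← mul_assoc, hs2]
    have e3 : (Real.sqrt β)⁻¹ * ((Real.sqrt β)⁻¹ * absΓt v v) = β⁻¹ * absΓt v v := by
      rw [← mul_assoc, ← mul_inv, hs2]
    rw [e1, e2, e3] at h
    exact h
  -- expansion of Γt w w
  have hexp : Γt w w = Γt u u - 2 * Γt u v + Γt v v := by
    have hwuv : w = u - v := by rw [huwv]; abel
    rw [hwuv]
    simp only [map_sub, ContinuousLinearMap.sub_apply]
    rw [hΓtsa v u]
    ring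
  -- splitting the pairing
  have hsplit : (DF z - DF xb) u = (DF z - DF xb) w + (DF z - DF xb) v := by
    rw [huwv, map_add]
  rw [ge_iff_le]
  linarith
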